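/- Every residuated semigroup embeds into a quantale (namely the quantale of Dedekind–MacNeille closed subsets) via a map preserving order, product, and both residuals. Moreover, if the residuated semigroup is finite, the quantale is finite. -/

import Mathlib

/-- A quantale: a complete lattice with an associative multiplication preserving
arbitrary suprema in both arguments. -/
structure BundledQuantale where
  Q : Type
  [lat : CompleteLattice Q]
  mul : Q → Q → Q
  assoc : ∀ a b c : Q, mul a (mul b c) = mul (mul a b) c
  distl : ∀ (a : Q) (S : Set Q), mul a (sSup S) = sSup {x | ∃ s ∈ S, x = mul a s}
  distr : ∀ (a : Q) (S : Set Q), mul (sSup S) a = sSup {x | ∃ s ∈ S, x = mul s a}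

attribute [instance] BundledQuantale.lat

namespace MacN
variable {A : Type} [PartialOrder A]

def ubs (S : Set A) : Set A := {b | ∀ x ∈ S, x ≤ b}
def lbs (S : Set A) : Set A := {b | ∀ x ∈ S, b ≤ x}
def mcl (S : Set A) : Set A := lbs (ubs S)

lemma subset_mcl (S : Set A) : S ⊆ mcl S := fun x hx b hb => hb x hx

lemma mcl_mono {S T : Set A} (h : S ⊆ T) : mcl S ⊆ mcl T :=
  fun x hx b hb => hx b (fun y hy => hb y (h hy))

lemma ubs_mcl (S : Set A) : ubs (mcl S) = ubs S :=
  subset_antisymm (fun b hb x hx => hb x (subset_mcl S hx))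
    (fun b hb x hx => hx b hb)

lemma mcl_idem (S : Set A) : mcl (mcl S) = mcl S := by
  show lbs (ubs (mcl S)) = mcl S
  rw [ubs_mcl]; rfl

lemma mcl_min {S T : Set A} (h : S ⊆ T) (hT : mcl T = T) : mcl S ⊆ T := by
  rw [← hT]; exact mcl_mono h

def pd (a : A) : Set A := {x | x ≤ a}

lemma pd_closed (a : A) : mcl (pd a) = pd a :=
  subset_antisymm (fun x hx => hx a (fun y hy => hy)) (subset_mcl _)

lemma mcl_singleton (a : A) : mcl ({a} : Set A) = pd a := by
  apply subset_antisymm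
  · exact fun x hx => hx a (fun y hy => by rw [Set.mem_singleton_iff] at hy; rw [hy])
  · exact fun x hx b hb => le_trans hx (hb a rfl)

def MC (A : Type) [PartialOrder A] : Type := {S : Set A // mcl S = S}

instance : PartialOrder (MC A) := Subtype.partialOrder _

lemma MC.le_iff {X Y : MC A} : X ≤ Y ↔ X.1 ⊆ Y.1 := Iff.rfl

instance : InfSet (MC A) :=
  ⟨fun T => ⟨⋂₀ (Subtype.val '' T), by
    apply subset_antisymm
    · intro x hx
      intro Y hY
      obtain ⟨C, hC, rfl⟩ := hY
      exact mcl_min (Set.sInter_subset_of_mem (Set.mem_image_of_mem _ hC)) C.2 hx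
    · exact subset_mcl _⟩⟩

instance : CompleteLattice (MC A) :=
  completeLatticeOfInf _ (fun T => by
    constructor
    · intro C hC x hx
      exact Set.sInter_subset_of_mem (Set.mem_image_of_mem _ hC) hx
    · intro D hD x hx
      show x ∈ ⋂₀ (Subtype.val '' T)
      rw [Set.mem_sInter]
      rintro Y ⟨C, hC, rfl⟩
      exact hD hC hx)

lemma MC_sSup (T : Set (MC A)) :
    (sSup T).1 = mcl (⋃₀ (Subtype.val '' T)) := by
  have h : IsLUB T (⟨mcl (⋃₀ (Subtype.val '' T)), mcl_idem _⟩ : MC A) := by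
    constructor
    · intro C hC x hx
      exact subset_mcl _ ⟨C.1, ⟨C, hC, rfl⟩, hx⟩
    · intro D hD
      apply mcl_min _ D.2
      intro x hx
      obtain ⟨Y, ⟨C, hC, rfl⟩, hxY⟩ := hx
      exact hD hC hxY
  rw [h.sSup_eq]


section Mul
variable {A : Type} [PartialOrder A] (mul : A → A → A)

def smul' (X Y : Set A) : Set A := {z | ∃ x ∈ X, ∃ y ∈ Y, z = mul x y}

lemma smul'_mono {X X' Y Y' : Set A} (h1 : X ⊆ X') (h2 : Y ⊆ Y') :
    smul' mul X Y ⊆ smul' mul X' Y' := by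
  rintro z ⟨x, hx, y, hy, rfl⟩
  exact ⟨x, h1 hx, y, h2 hy, rfl⟩

lemma smul'_mcl_subset (ld rd : A → A → A)
    (hres : ∀ a b c : A, (b ≤ ld a c ↔ mul a b ≤ c) ∧ (mul a b ≤ c ↔ a ≤ rd c b))
    (X Y : Set A) :
    smul' mul (mcl X) (mcl Y) ⊆ mcl (smul' mul X Y) := by
  rintro z ⟨p, hp, q, hq, rfl⟩ b hb
  -- hb : b ∈ ubs (smul' mul X Y)
  have hxq : ∀ x ∈ X, mul x q ≤ b := by
    intro x hx
    have hub : ld x b ∈ ubs Y := by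
      intro y hy
      exact (hres x y b).1.mpr (hb _ ⟨x, hx, y, hy, rfl⟩)
    exact (hres x q b).1.mp (hq _ hub)
  have hub : rd b q ∈ ubs X := fun x hx => (hres x q b).2.mp (hxq x hx)
  exact (hres p q b).2.mpr (hp _ hub)

lemma mcl_smul'_mcl (ld rd : A → A → A)
    (hres : ∀ a b c : A, (b ≤ ld a c ↔ mul a b ≤ c) ∧ (mul a b ≤ c ↔ a ≤ rd c b))
    (X Y : Set A) :
    mcl (smul' mul (mcl X) (mcl Y)) = mcl (smul' mul X Y) :=
  subset_antisymm (mcl_min (smul'_mcl_subset mul ld rd hres X Y) (mcl_idem _))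
    (mcl_mono (smul'_mono mul (subset_mcl X) (subset_mcl Y)))

end Mul

section Aux
variable {A : Type} [PartialOrder A]

lemma mcl_biUnion_mcl {ι : Type} (I : Set ι) (g : ι → Set A) :
    mcl (⋃ i ∈ I, mcl (g i)) = mcl (⋃ i ∈ I, g i) := by
  apply subset_antisymm
  · apply mcl_min _ (mcl_idem _)
    intro x hx
    simp only [Set.mem_iUnion] at hx
    obtain ⟨i, hi, hxi⟩ := hx
    exact mcl_mono (Set.subset_biUnion_of_mem hi) hxi
  · apply mcl_mono
    exact Set.iUnion₂_mono (fun i _ => subset_mcl (g i))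

end Aux

section Main
variable {A : Type} [PartialOrder A]

lemma smul'_assoc (mul : A → A → A)
    (hassoc : ∀ a b c : A, mul a (mul b c) = mul (mul a b) c) (X Y Z : Set A) :
    smul' mul X (smul' mul Y Z) = smul' mul (smul' mul X Y) Z := by
  ext z
  constructor
  · rintro ⟨x, hx, w, ⟨y, hy, v, hv, rfl⟩, rfl⟩
    exact ⟨mul x y, ⟨x, hx, y, hy, rfl⟩, v, hv, hassoc x y v⟩
  · rintro ⟨w, ⟨x, hx, y, hy, rfl⟩, v, hv, rfl⟩
    exact ⟨x, hx, mul y v, ⟨y, hy, v, hv, rfl⟩, (hassoc x y v).symm⟩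

lemma smul'_sUnion_left (mul : A → A → A) (X : Set A) (S : Set (MC A)) :
    smul' mul X (⋃₀ (Subtype.val '' S)) = ⋃ s ∈ S, smul' mul X s.1 := by
  ext z
  constructor
  · rintro ⟨x, hx, y, hy, rfl⟩
    obtain ⟨Y, ⟨C, hC, rfl⟩, hyY⟩ := hy
    exact Set.mem_biUnion hC ⟨x, hx, y, hyY, rfl⟩
  · intro hz
    simp only [Set.mem_iUnion] at hz
    obtain ⟨C, hC, x, hx, y, hy, rfl⟩ := hz
    exact ⟨x, hx, y, ⟨C.1, ⟨C, hC, rfl⟩, hy⟩, rfl⟩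

lemma smul'_sUnion_right (mul : A → A → A) (X : Set A) (S : Set (MC A)) :
    smul' mul (⋃₀ (Subtype.val '' S)) X = ⋃ s ∈ S, smul' mul s.1 X := by
  ext z
  constructor
  · rintro ⟨x, hx, y, hy, rfl⟩
    obtain ⟨Y, ⟨C, hC, rfl⟩, hxY⟩ := hx
    exact Set.mem_biUnion hC ⟨x, hxY, y, hy, rfl⟩
  · intro hz
    simp only [Set.mem_iUnion] at hz
    obtain ⟨C, hC, x, hx, y, hy, rfl⟩ := hz
    exact ⟨x, ⟨C.1, ⟨C, hC, rfl⟩, hx⟩, y, hy, rfl⟩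

end Main

end MacN

open MacN

/-- Every residuated semigroup embeds into a quantale via a map preserving
order, product and both residuals; if the semigroup is finite, the quantale
can be taken finite. -/
theorem residuated_semigroup_embeds_into_quantale {A : Type} [PartialOrder A]
    (mul : A → A → A)
    (hassoc : ∀ a b c : A, mul a (mul b c) = mul (mul a b) c)
    (hmono₁ : ∀ a b c : A, a ≤ b → mul a c ≤ mul b c)
    (hmono₂ : ∀ a b c : A, a ≤ b → mul c a ≤ mul c b)
    (ld rd : A → A → A)
    (hres : ∀ a b c : A, (b ≤ ld a c ↔ mul a b ≤ c) ∧ (mul a b ≤ c ↔ a ≤ rd c b)) :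
    ∃ (Q : BundledQuantale) (f : A → Q.Q),
      Function.Injective f ∧
      (∀ a b : A, a ≤ b ↔ f a ≤ f b) ∧
      (∀ a b : A, f (mul a b) = Q.mul (f a) (f b)) ∧
      (∀ a b : A, f (ld a b) = sSup {c | Q.mul (f a) c ≤ f b}) ∧
      (∀ a b : A, f (rd a b) = sSup {c | Q.mul c (f b) ≤ f a}) ∧
      (Finite A → Finite Q.Q) := by
  classical
  set qmul : MC A → MC A → MC A :=
    fun X Y => ⟨mcl (smul' mul X.1 Y.1), mcl_idem _⟩ with hqmul
  have key : ∀ X Y : Set A, mcl (smul' mul (mcl X) (mcl Y)) = mcl (smul' mul X Y) :=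
    fun X Y => mcl_smul'_mcl mul ld rd hres X Y
  have hassocQ : ∀ a b c : MC A, qmul a (qmul b c) = qmul (qmul a b) c := by
    intro a b c
    apply Subtype.ext
    show mcl (smul' mul a.1 (mcl (smul' mul b.1 c.1)))
        = mcl (smul' mul (mcl (smul' mul a.1 b.1)) c.1)
    have h1 : mcl (smul' mul a.1 (mcl (smul' mul b.1 c.1)))
        = mcl (smul' mul a.1 (smul' mul b.1 c.1)) := by
      conv_lhs => rw [← a.2]
      exact key a.1 (smul' mul b.1 c.1)
    have h2 : mcl (smul' mul (mcl (smul' mul a.1 b.1)) c.1)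
        = mcl (smul' mul (smul' mul a.1 b.1) c.1) := by
      conv_lhs => rw [← c.2]
      exact key (smul' mul a.1 b.1) c.1
    rw [h1, h2, smul'_assoc mul hassoc]
  have hdistl : ∀ (a : MC A) (S : Set (MC A)),
      qmul a (sSup S) = sSup {x | ∃ s ∈ S, x = qmul a s} := by
    intro a S
    apply Subtype.ext
    show mcl (smul' mul a.1 (sSup S).1) = (sSup {x | ∃ s ∈ S, x = qmul a s}).1
    rw [MC_sSup, MC_sSup]
    have h1 : mcl (smul' mul a.1 (mcl (⋃₀ (Subtype.val '' S))))
        = mcl (smul' mul a.1 (⋃₀ (Subtype.val '' S))) := by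
      conv_lhs => rw [← a.2]
      exact key a.1 _
    have h2 : ⋃₀ (Subtype.val '' {x | ∃ s ∈ S, x = qmul a s})
        = ⋃ s ∈ S, mcl (smul' mul a.1 s.1) := by
      ext z
      constructor
      · rintro ⟨Y, ⟨C, ⟨s, hs, rfl⟩, rfl⟩, hz⟩
        exact Set.mem_biUnion hs hz
      · intro hz
        simp only [Set.mem_iUnion] at hz
        obtain ⟨s, hs, hz⟩ := hz
        exact ⟨(qmul a s).1, ⟨qmul a s, ⟨s, hs, rfl⟩, rfl⟩, hz⟩
    rw [h1]
    show mcl (smul' mul a.1 (⋃₀ (Subtype.val '' S)))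
        = mcl (⋃₀ (Subtype.val '' {x | ∃ s ∈ S, x = qmul a s}))
    rw [h2, smul'_sUnion_left, mcl_biUnion_mcl]
  have hdistr : ∀ (a : MC A) (S : Set (MC A)),
      qmul (sSup S) a = sSup {x | ∃ s ∈ S, x = qmul s a} := by
    intro a S
    apply Subtype.ext
    show mcl (smul' mul (sSup S).1 a.1) = (sSup {x | ∃ s ∈ S, x = qmul s a}).1
    rw [MC_sSup, MC_sSup]
    have h1 : mcl (smul' mul (mcl (⋃₀ (Subtype.val '' S))) a.1)
        = mcl (smul' mul (⋃₀ (Subtype.val '' S)) a.1) := by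
      conv_lhs => rw [← a.2]
      exact key _ a.1
    have h2 : ⋃₀ (Subtype.val '' {x | ∃ s ∈ S, x = qmul s a})
        = ⋃ s ∈ S, mcl (smul' mul s.1 a.1) := by
      ext z
      constructor
      · rintro ⟨Y, ⟨C, ⟨s, hs, rfl⟩, rfl⟩, hz⟩
        exact Set.mem_biUnion hs hz
      · intro hz
        simp only [Set.mem_iUnion] at hz
        obtain ⟨s, hs, hz⟩ := hz
        exact ⟨(qmul s a).1, ⟨qmul s a, ⟨s, hs, rfl⟩, rfl⟩, hz⟩
    rw [h1]
    show mcl (smul' mul (⋃₀ (Subtype.val '' S)) a.1)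
        = mcl (⋃₀ (Subtype.val '' {x | ∃ s ∈ S, x = qmul s a}))
    rw [h2, smul'_sUnion_right, mcl_biUnion_mcl]
  refine ⟨{ Q := MC A, mul := qmul, assoc := hassocQ, distl := hdistl, distr := hdistr },
    fun a => ⟨pd a, pd_closed a⟩, ?_, ?_, ?_, ?_, ?_, ?_⟩
  · -- injective
    intro a b h
    have h' : pd a = pd b := congrArg Subtype.val h
    have ha : a ∈ pd b := h' ▸ (le_refl a : a ∈ pd a)
    have hb : b ∈ pd a := h'.symm ▸ (le_refl b : b ∈ pd b)
    exact le_antisymm ha hb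
  · -- order embedding
    intro a b
    constructor
    · intro h
      show pd a ⊆ pd b
      exact fun x hx => le_trans hx h
    · intro h
      exact h (le_refl a : a ∈ pd a)
  · -- multiplication
    intro a b
    apply Subtype.ext
    show pd (mul a b) = mcl (smul' mul (pd a) (pd b))
    apply subset_antisymm
    · rw [← mcl_singleton (mul a b)]
      exact mcl_mono (Set.singleton_subset_iff.mpr ⟨a, le_refl a, b, le_refl b, rfl⟩)
    · apply mcl_min _ (pd_closed _)
      rintro z ⟨x, hx, y, hy, rfl⟩
      exact le_trans (hmono₁ x a y hx) (hmono₂ y b a hy)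
  · -- left residual
    intro a b
    apply Subtype.ext
    show pd (ld a b)
        = (sSup {c : MC A | qmul ⟨pd a, pd_closed a⟩ c ≤ ⟨pd b, pd_closed b⟩}).1
    rw [MC_sSup]
    have hU : ⋃₀ (Subtype.val ''
        {c : MC A | qmul ⟨pd a, pd_closed a⟩ c ≤ ⟨pd b, pd_closed b⟩}) = pd (ld a b) := by
      apply subset_antisymm
      · rintro z ⟨Y, ⟨C, hC, rfl⟩, hz⟩
        have hble : mcl (smul' mul (pd a) C.1) ⊆ pd b := hC
        have : mul a z ≤ b := hble (subset_mcl _ ⟨a, le_refl a, z, hz, rfl⟩)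
        exact (hres a z b).1.mpr this
      · have hmem : qmul ⟨pd a, pd_closed a⟩ ⟨pd (ld a b), pd_closed _⟩
            ≤ ⟨pd b, pd_closed b⟩ := by
          show mcl (smul' mul (pd a) (pd (ld a b))) ⊆ pd b
          apply mcl_min _ (pd_closed _)
          rintro z ⟨x, hx, y, hy, rfl⟩
          have h1 : mul a (ld a b) ≤ b := (hres a (ld a b) b).1.mp (le_refl _)
          exact le_trans (le_trans (hmono₂ y (ld a b) x hy)
            (hmono₁ x a (ld a b) hx)) h1
        intro z hz
        exact ⟨pd (ld a b), ⟨⟨pd (ld a b), pd_closed _⟩, hmem, rfl⟩, hz⟩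
    exact ((congrArg mcl hU).trans (pd_closed _)).symm
  · -- right residual
    intro a b
    apply Subtype.ext
    show pd (rd a b)
        = (sSup {c : MC A | qmul c ⟨pd b, pd_closed b⟩ ≤ ⟨pd a, pd_closed a⟩}).1
    rw [MC_sSup]
    have hU : ⋃₀ (Subtype.val ''
        {c : MC A | qmul c ⟨pd b, pd_closed b⟩ ≤ ⟨pd a, pd_closed a⟩}) = pd (rd a b) := by
      apply subset_antisymm
      · rintro z ⟨Y, ⟨C, hC, rfl⟩, hz⟩
        have hble : mcl (smul' mul C.1 (pd b)) ⊆ pd a := hC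
        have : mul z b ≤ a := hble (subset_mcl _ ⟨z, hz, b, le_refl b, rfl⟩)
        exact (hres z b a).2.mp this
      · have hmem : qmul ⟨pd (rd a b), pd_closed _⟩ ⟨pd b, pd_closed b⟩
            ≤ ⟨pd a, pd_closed a⟩ := by
          show mcl (smul' mul (pd (rd a b)) (pd b)) ⊆ pd a
          apply mcl_min _ (pd_closed _)
          rintro z ⟨x, hx, y, hy, rfl⟩
          have h1 : mul (rd a b) b ≤ a := (hres (rd a b) b a).2.mpr (le_refl _)
          exact le_trans (le_trans (hmono₂ y b x hy)
            (hmono₁ x (rd a b) b hx)) h1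
        intro z hz
        exact ⟨pd (rd a b), ⟨⟨pd (rd a b), pd_closed _⟩, hmem, rfl⟩, hz⟩
    exact ((congrArg mcl hU).trans (pd_closed _)).symm
  · -- finiteness
    intro hA
    show Finite {S : Set A // mcl S = S}
    infer_instance
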